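/- Every sylvester congruence class of words over the positive integers contains exactly one word avoiding the patterns aba and acb; moreover such a word w is uniquely determined by the pair (NInc(w), Low(w)), where NInc(w) is the nonincreasing rearrangement of w and Low(w) is the largest nonincreasing word componentwise below w. -/

import Mathlib

/-- One application of a sylvester commutation `a c ⋯ b ≡ c a ⋯ b` with `a ≤ b < c`. -/
def SylStep (w₁ w₂ : List ℕ) : Prop :=
  ∃ (p q r : List ℕ) (a b c : ℕ), a ≤ b ∧ b < c ∧
    w₁ = p ++ a :: c :: (q ++ b :: r) ∧
    w₂ = p ++ c :: a :: (q ++ b :: r)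

/-- The sylvester congruence: equivalence generated by the commutations. -/
def Syl : List ℕ → List ℕ → Prop := Relation.EqvGen SylStep

/-- `w` avoids the pattern `aba`. -/
def AvoidsABA (w : List ℕ) : Prop :=
  ∀ i j k, i < j → j < k → k < w.length →
    ¬ (w.getD i 0 = w.getD k 0 ∧ w.getD k 0 < w.getD j 0)

/-- `w` avoids the pattern `acb`. -/
def AvoidsACB (w : List ℕ) : Prop :=
  ∀ i j k, i < j → j < k → k < w.length →
    ¬ (w.getD i 0 < w.getD k 0 ∧ w.getD k 0 < w.getD j 0)

/-- `low w`: the running minimum of `w`, i.e. the componentwise-largest nonincreasing word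
below `w`; it records the left-to-right minima of `w`. -/
def low : List ℕ → List ℕ
  | [] => []
  | a :: w => a :: (low w).map (min a)

def Good (w : List ℕ) : Prop :=
  ∀ i j k, i < j → j < k → k < w.length →
    ¬ (w.getD i 0 ≤ w.getD k 0 ∧ w.getD k 0 < w.getD j 0)

def swapAdj (w : List ℕ) (j : ℕ) : List ℕ :=
  (w.set j (w.getD (j+1) 0)).set (j+1) (w.getD j 0)

lemma length_swapAdj (w : List ℕ) (j : ℕ) : (swapAdj w j).length = w.length := by
  simp [swapAdj]

lemma getD_swapAdj (w : List ℕ) (j t : ℕ) (hj : j + 1 < w.length) :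
    (swapAdj w j).getD t 0 =
      if t = j then w.getD (j+1) 0 else if t = j+1 then w.getD j 0 else w.getD t 0 := by
  by_cases ht : t < w.length
  · have h1 : t < (swapAdj w j).length := by rw [length_swapAdj]; exact ht
    rw [List.getD_eq_getElem _ _ h1]
    simp only [swapAdj, List.getElem_set]
    split_ifs with h2 h3 h4 h5 h6 h7 <;>
      first
        | omega
        | (symm; exact List.getD_eq_getElem _ _ (by omega))
  · have ht' : w.length ≤ t := le_of_not_gt ht
    rw [List.getD_eq_default _ _ (by rw [length_swapAdj]; exact ht'),
        List.getD_eq_default _ _ ht']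
    have : ¬ (t = j) := by omega
    have h2 : ¬ (t = j + 1) := by omega
    simp [this, h2]

lemma decomp (w : List ℕ) (j k : ℕ) (h1 : j + 1 < k) (h2 : k < w.length) :
    w = w.take j ++ w.getD j 0 :: w.getD (j+1) 0 ::
      (((w.drop (j+2)).take (k - (j+2))) ++ w.getD k 0 :: w.drop (k+1)) := by
  have hj : j < w.length := by omega
  have hj1 : j + 1 < w.length := by omega
  conv_lhs => rw [← List.take_append_drop j w]
  congr 1
  rw [List.drop_eq_getElem_cons hj, List.getD_eq_getElem _ _ hj]
  congr 1
  rw [List.drop_eq_getElem_cons (by simpa using hj1 : j + 1 < w.length),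
      List.getD_eq_getElem _ _ hj1]
  congr 1
  conv_lhs => rw [← List.take_append_drop (k - (j+2)) (w.drop (j+2))]
  congr 1
  rw [List.drop_drop]
  have : j + 2 + (k - (j + 2)) = k := by omega
  rw [this, List.drop_eq_getElem_cons h2, List.getD_eq_getElem _ _ h2]

lemma swapAdj_append (p : List ℕ) (a c : ℕ) (z : List ℕ) :
    swapAdj (p ++ a :: c :: z) p.length = p ++ c :: a :: z := by
  induction p with
  | nil => simp [swapAdj]
  | cons x p ih =>
    simp only [List.cons_append, List.length_cons, swapAdj, List.getD_cons_succ,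
      List.set_cons_succ] at *
    rw [ih]

lemma swapAdj_append' (p : List ℕ) (a c : ℕ) (z : List ℕ) (j : ℕ) (hp : p.length = j) :
    swapAdj (p ++ a :: c :: z) j = p ++ c :: a :: z := by
  subst hp; exact swapAdj_append p a c z

def Step' (w₁ w₂ : List ℕ) : Prop :=
  ∃ j k, j + 1 < k ∧ k < w₁.length ∧
    w₁.getD j 0 ≤ w₁.getD k 0 ∧ w₁.getD k 0 < w₁.getD (j+1) 0 ∧
    w₂ = swapAdj w₁ j

lemma getD_append_right' (p l : List ℕ) (t : ℕ) :
    (p ++ l).getD (p.length + t) 0 = l.getD t 0 := by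
  induction p with
  | nil => simp
  | cons x p ih =>
    rw [List.cons_append, show (x :: p).length + t = (p.length + t) + 1 by simp; omega,
      List.getD_cons_succ]
    exact ih

lemma getD_concat (p : List ℕ) (a : ℕ) (l : List ℕ) :
    (p ++ a :: l).getD p.length 0 = a := by
  have := getD_append_right' p (a :: l) 0
  simpa using this

lemma getD_append_left' (p l : List ℕ) (t : ℕ) (ht : t < p.length) :
    (p ++ l).getD t 0 = p.getD t 0 := by
  rw [List.getD_eq_getElem _ _ (by simp; omega), List.getD_eq_getElem _ _ ht]
  exact List.getElem_append_left ht

lemma sylStep_iff (w₁ w₂ : List ℕ) : SylStep w₁ w₂ ↔ Step' w₁ w₂ := by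
  constructor
  · rintro ⟨p, q, r, a, b, c, hab, hbc, h1, h2⟩
    subst h1 h2
    have e1 : (p ++ a :: c :: (q ++ b :: r)).getD p.length 0 = a :=
      getD_concat p a _
    have e3 : (p ++ a :: c :: (q ++ b :: r)).getD (p.length + 1) 0 = c := by
      have h := getD_concat (p ++ [a]) c (q ++ b :: r)
      simp only [List.append_assoc, List.cons_append, List.nil_append,
        List.length_append, List.length_cons, List.length_nil] at h
      convert h using 2
    have e2 : (p ++ a :: c :: (q ++ b :: r)).getD (p.length + 2 + q.length) 0 = b := by
      have h := getD_concat ((p ++ [a, c]) ++ q) b r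
      simp only [List.append_assoc, List.cons_append, List.nil_append,
        List.length_append, List.length_cons, List.length_nil] at h
      convert h using 2
      omega
    refine ⟨p.length, p.length + 2 + q.length, by omega, by simp; omega, ?_, ?_, ?_⟩
    · rw [e1, e2]; exact hab
    · rw [e2, e3]; exact hbc
    · rw [swapAdj_append]
  · rintro ⟨j, k, hjk, hk, h1, h2, h3⟩
    refine ⟨w₁.take j, (w₁.drop (j+2)).take (k - (j+2)), w₁.drop (k+1),
      w₁.getD j 0, w₁.getD k 0, w₁.getD (j+1) 0, h1, h2, decomp w₁ j k hjk hk, ?_⟩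
    have hp : (w₁.take j).length = j := by
      rw [List.length_take]; omega
    rw [h3]
    conv_lhs => rw [decomp w₁ j k hjk hk]
    exact swapAdj_append' _ _ _ _ j hp

def meas : List ℕ → ℕ
  | [] => 0
  | _ :: l => l.sum + meas l

lemma meas_append (p x : List ℕ) :
    meas (p ++ x) = meas p + p.length * x.sum + meas x := by
  induction p with
  | nil => simp [meas]
  | cons a p ih =>
    simp only [List.cons_append, meas, List.sum_append, ih, List.length_cons,
      List.append_eq]
    ring

lemma meas_lt {w₁ w₂ : List ℕ} (h : SylStep w₁ w₂) : meas w₂ < meas w₁ := by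
  obtain ⟨p, q, r, a, b, c, hab, hbc, h1, h2⟩ := h
  subst h1 h2
  rw [meas_append, meas_append]
  simp only [meas, List.sum_cons]
  have : a < c := by omega
  rw [show a + (c + (q ++ b :: r).sum) = c + (a + (q ++ b :: r).sum) from by omega]
  omega

lemma ascent (w : List ℕ) (t i : ℕ) (hi : w.getD i 0 ≤ t) :
    ∀ j, i < j → t < w.getD j 0 →
    ∃ m, i ≤ m ∧ m + 1 ≤ j ∧ w.getD m 0 ≤ t ∧ t < w.getD (m+1) 0 := by
  intro j
  induction j with
  | zero => omega
  | succ j ih =>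
    intro hij hj
    by_cases hle : w.getD j 0 ≤ t
    · exact ⟨j, by omega, le_refl _, hle, hj⟩
    · have hij' : i < j := by
        rcases Nat.lt_or_ge i j with h | h
        · exact h
        · have : i = j := by omega
          subst this; omega
      exact (ih hij' (by omega)).imp fun m ⟨h1, h2, h3, h4⟩ => ⟨h1, by omega, h3, h4⟩

lemma good_no_step {w u : List ℕ} (hG : Good w) (h : SylStep w u) : False := by
  rw [sylStep_iff] at h
  obtain ⟨j, k, hjk, hk, h1, h2, _⟩ := h
  exact hG j (j+1) k (by omega) hjk hk ⟨h1, h2⟩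

lemma exists_step_of_not_good {w : List ℕ} (hG : ¬ Good w) : ∃ u, SylStep w u := by
  simp only [Good, not_forall] at hG
  obtain ⟨i, j, k, hij, hjk, hk, h⟩ := hG
  rw [not_not] at h
  obtain ⟨h1, h2⟩ := h
  obtain ⟨m, hm1, hm2, hm3, hm4⟩ := ascent w (w.getD k 0) i h1 j hij h2
  refine ⟨swapAdj w m, ?_⟩
  rw [sylStep_iff]
  exact ⟨m, k, by omega, hk, hm3, hm4, rfl⟩

lemma getD_swapAdj_left (w : List ℕ) (j : ℕ) (h : j + 1 < w.length) :
    (swapAdj w j).getD j 0 = w.getD (j+1) 0 := by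
  rw [getD_swapAdj w j j h, if_pos rfl]

lemma getD_swapAdj_right (w : List ℕ) (j : ℕ) (h : j + 1 < w.length) :
    (swapAdj w j).getD (j+1) 0 = w.getD j 0 := by
  rw [getD_swapAdj w j (j+1) h, if_neg (by omega), if_pos rfl]

lemma getD_swapAdj_other (w : List ℕ) (j t : ℕ) (h : j + 1 < w.length)
    (ht : t ≠ j) (ht' : t ≠ j + 1) : (swapAdj w j).getD t 0 = w.getD t 0 := by
  rw [getD_swapAdj w j t h, if_neg ht, if_neg ht']

lemma swap_comm (w : List ℕ) (j j' : ℕ) (h : j + 1 < j') (hlen : j' + 1 < w.length) :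
    swapAdj (swapAdj w j) j' = swapAdj (swapAdj w j') j := by
  have h1 : j + 1 < w.length := by omega
  have h2 : j' + 1 < w.length := hlen
  apply List.ext_getElem (by simp [length_swapAdj])
  intro n hn1 hn2
  rw [← List.getD_eq_getElem _ 0 hn1, ← List.getD_eq_getElem _ 0 hn2]
  simp only [getD_swapAdj, length_swapAdj, h1, h2]
  split_ifs <;> first | rfl | omega

lemma swap_braid (w : List ℕ) (j : ℕ) (hlen : j + 1 + 1 < w.length) :
    swapAdj (swapAdj (swapAdj w j) (j+1)) j
      = swapAdj (swapAdj (swapAdj w (j+1)) j) (j+1) := by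
  have h1 : j + 1 < w.length := by omega
  have h2 : j + 1 + 1 < w.length := hlen
  apply List.ext_getElem (by simp [length_swapAdj])
  intro n hn1 hn2
  rw [← List.getD_eq_getElem _ 0 hn1, ← List.getD_eq_getElem _ 0 hn2]
  simp only [getD_swapAdj, length_swapAdj, h1, h2]
  split_ifs <;> first | rfl | omega

abbrev RT : List ℕ → List ℕ → Prop := Relation.ReflTransGen SylStep

lemma rt_single' {u v : List ℕ} (h : Step' u v) : RT u v :=
  Relation.ReflTransGen.single ((sylStep_iff u v).mpr h)

lemma locAux (w : List ℕ) (j k j' k' : ℕ) (hle : j ≤ j')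
    (hjk : j + 1 < k) (hk : k < w.length)
    (h1 : w.getD j 0 ≤ w.getD k 0) (h2 : w.getD k 0 < w.getD (j+1) 0)
    (hjk' : j' + 1 < k') (hk' : k' < w.length)
    (h1' : w.getD j' 0 ≤ w.getD k' 0) (h2' : w.getD k' 0 < w.getD (j'+1) 0) :
    ∃ d, RT (swapAdj w j) d ∧ RT (swapAdj w j') d := by
  have hlj : j + 1 < w.length := by omega
  have hlj' : j' + 1 < w.length := by omega
  rcases eq_or_lt_of_le hle with rfl | hlt
  · exact ⟨swapAdj w j, Relation.ReflTransGen.refl, Relation.ReflTransGen.refl⟩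
  rcases eq_or_lt_of_le (show j + 1 ≤ j' from hlt) with rfl | hlt2
  · -- braid case : j' = j + 1
    have hy : w.getD j 0 < w.getD (j+1) 0 := by omega
    have hz : w.getD (j+1) 0 < w.getD (j+1+1) 0 := by omega
    have hk3 : j + 1 + 1 < k := by
      rcases Nat.lt_or_ge (j+1+1) k with h | h
      · exact h
      · have : k = j + 1 + 1 := by omega
        subst this
        omega
    set u := swapAdj w j with hu
    set u' := swapAdj w (j+1) with hu'
    have hul : u.length = w.length := length_swapAdj w j
    have hul' : u'.length = w.length := length_swapAdj w (j+1)
    -- values in u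
    have u_j : u.getD j 0 = w.getD (j+1) 0 := getD_swapAdj_left w j hlj
    have u_j1 : u.getD (j+1) 0 = w.getD j 0 := getD_swapAdj_right w j hlj
    have u_j2 : u.getD (j+1+1) 0 = w.getD (j+1+1) 0 :=
      getD_swapAdj_other w j _ hlj (by omega) (by omega)
    have u_k' : u.getD k' 0 = w.getD k' 0 :=
      getD_swapAdj_other w j _ hlj (by omega) (by omega)
    have u_k : u.getD k 0 = w.getD k 0 :=
      getD_swapAdj_other w j _ hlj (by omega) (by omega)
    -- values in u'
    have u'_j : u'.getD j 0 = w.getD j 0 :=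
      getD_swapAdj_other w (j+1) _ hlj' (by omega) (by omega)
    have u'_j1 : u'.getD (j+1) 0 = w.getD (j+1+1) 0 := getD_swapAdj_left w (j+1) hlj'
    have u'_j2 : u'.getD (j+1+1) 0 = w.getD (j+1) 0 := getD_swapAdj_right w (j+1) hlj'
    have u'_k : u'.getD k 0 = w.getD k 0 :=
      getD_swapAdj_other w (j+1) _ hlj' (by omega) (by omega)
    -- left branch: u → swapAdj u (j+1) → d₁
    have s1 : Step' u (swapAdj u (j+1)) := by
      refine ⟨j+1, k', hjk', by omega, ?_, ?_, rfl⟩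
      · rw [u_j1, u_k']; omega
      · rw [u_j2, u_k']; omega
    have hvl : (swapAdj u (j+1)).length = w.length := by rw [length_swapAdj, hul]
    have hulj : j + 1 + 1 < u.length := by omega
    have v_j : (swapAdj u (j+1)).getD j 0 = w.getD (j+1) 0 := by
      rw [getD_swapAdj_other u (j+1) j hulj (by omega) (by omega), u_j]
    have v_j1 : (swapAdj u (j+1)).getD (j+1) 0 = w.getD (j+1+1) 0 := by
      rw [getD_swapAdj_left u (j+1) hulj, u_j2]
    have v_k' : (swapAdj u (j+1)).getD k' 0 = w.getD k' 0 := by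
      rw [getD_swapAdj_other u (j+1) k' hulj (by omega) (by omega), u_k']
    have s2 : Step' (swapAdj u (j+1)) (swapAdj (swapAdj u (j+1)) j) := by
      refine ⟨j, k', by omega, by omega, ?_, ?_, rfl⟩
      · rw [v_j, v_k']; omega
      · rw [v_j1, v_k']; omega
    -- right branch: u' → swapAdj u' j → d₂
    have s1' : Step' u' (swapAdj u' j) := by
      refine ⟨j, k, hjk, by omega, ?_, ?_, rfl⟩
      · rw [u'_j, u'_k]; omega
      · rw [u'_j1, u'_k]; omega
    have hulj2 : j + 1 < u'.length := by omega
    have v'_j1 : (swapAdj u' j).getD (j+1) 0 = w.getD j 0 := by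
      rw [getD_swapAdj_right u' j hulj2, u'_j]
    have v'_j2 : (swapAdj u' j).getD (j+1+1) 0 = w.getD (j+1) 0 := by
      rw [getD_swapAdj_other u' j (j+1+1) hulj2 (by omega) (by omega), u'_j2]
    have v'_k : (swapAdj u' j).getD k 0 = w.getD k 0 := by
      rw [getD_swapAdj_other u' j k hulj2 (by omega) (by omega), u'_k]
    have hvl' : (swapAdj u' j).length = w.length := by rw [length_swapAdj, hul']
    have s2' : Step' (swapAdj u' j) (swapAdj (swapAdj u' j) (j+1)) := by
      refine ⟨j+1, k, hk3, by omega, ?_, ?_, rfl⟩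
      · rw [v'_j1, v'_k]; omega
      · rw [v'_j2, v'_k]; omega
    refine ⟨swapAdj (swapAdj u (j+1)) j, (rt_single' s1).trans (rt_single' s2), ?_⟩
    rw [hu, hu', swap_braid w j (by omega)]
    exact (rt_single' s1').trans (rt_single' s2')
  · -- disjoint case : j + 1 < j'
    set u := swapAdj w j with hu
    set u' := swapAdj w j' with hu'
    have hul : u.length = w.length := length_swapAdj w j
    have hul' : u'.length = w.length := length_swapAdj w j'
    have u_j' : u.getD j' 0 = w.getD j' 0 :=
      getD_swapAdj_other w j _ hlj (by omega) (by omega)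
    have u_j'1 : u.getD (j'+1) 0 = w.getD (j'+1) 0 :=
      getD_swapAdj_other w j _ hlj (by omega) (by omega)
    have u_k' : u.getD k' 0 = w.getD k' 0 :=
      getD_swapAdj_other w j _ hlj (by omega) (by omega)
    have u'_j : u'.getD j 0 = w.getD j 0 :=
      getD_swapAdj_other w j' _ hlj' (by omega) (by omega)
    have u'_j1 : u'.getD (j+1) 0 = w.getD (j+1) 0 :=
      getD_swapAdj_other w j' _ hlj' (by omega) (by omega)
    have s1 : Step' u (swapAdj u j') := by
      refine ⟨j', k', hjk', by omega, ?_, ?_, rfl⟩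
      · rw [u_j', u_k']; omega
      · rw [u_j'1, u_k']; omega
    have s1' : Step' u' (swapAdj u' j) := by
      by_cases hkj : k = j'
      · refine ⟨j, j'+1, by omega, by omega, ?_, ?_, rfl⟩
        · rw [u'_j, getD_swapAdj_right w j' hlj', ← hkj]; omega
        · rw [u'_j1, getD_swapAdj_right w j' hlj', ← hkj]; omega
      by_cases hkj1 : k = j' + 1
      · refine ⟨j, j', by omega, by omega, ?_, ?_, rfl⟩
        · rw [u'_j, getD_swapAdj_left w j' hlj', ← hkj1]; omega
        · rw [u'_j1, getD_swapAdj_left w j' hlj', ← hkj1]; omega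
      · refine ⟨j, k, hjk, by omega, ?_, ?_, rfl⟩
        · rw [u'_j, getD_swapAdj_other w j' k hlj' hkj hkj1]; omega
        · rw [u'_j1, getD_swapAdj_other w j' k hlj' hkj hkj1]; omega
    refine ⟨swapAdj u j', rt_single' s1, ?_⟩
    rw [swap_comm w j j' hlt2 hlj']
    exact rt_single' s1'

lemma locConf {w u u' : List ℕ} (h : SylStep w u) (h' : SylStep w u') :
    ∃ d, RT u d ∧ RT u' d := by
  rw [sylStep_iff] at h h'
  obtain ⟨j, k, hjk, hk, h1, h2, rfl⟩ := h
  obtain ⟨j', k', hjk', hk', h1', h2', rfl⟩ := h'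
  rcases le_total j j' with hle | hle
  · exact locAux w j k j' k' hle hjk hk h1 h2 hjk' hk' h1' h2'
  · obtain ⟨d, hd1, hd2⟩ := locAux w j' k' j k hle hjk' hk' h1' h2' hjk hk h1 h2
    exact ⟨d, hd2, hd1⟩

lemma confluent_aux : ∀ n w, meas w = n → ∀ u u', RT w u → RT w u' →
    ∃ d, RT u d ∧ RT u' d := by
  intro n
  induction n using Nat.strong_induction_on with
  | _ n ih =>
    intro w hm u u' h1 h2
    rcases h1.cases_head with rfl | ⟨w₁, hs, h1'⟩
    · exact ⟨u', h2, Relation.ReflTransGen.refl⟩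
    rcases h2.cases_head with rfl | ⟨w₂, hs', h2'⟩
    · exact ⟨u, Relation.ReflTransGen.refl, Relation.ReflTransGen.head hs h1'⟩
    obtain ⟨e, he1, he2⟩ := locConf hs hs'
    obtain ⟨f, hf1, hf2⟩ := ih (meas w₁) (hm ▸ meas_lt hs) w₁ rfl u e h1' he1
    obtain ⟨d, hd1, hd2⟩ := ih (meas w₂) (hm ▸ meas_lt hs') w₂ rfl f u' (he2.trans hf2) h2'
    exact ⟨d, hf1.trans hd1, hd2⟩

lemma confluent {w u u' : List ℕ} (h1 : RT w u) (h2 : RT w u') :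
    ∃ d, RT u d ∧ RT u' d :=
  confluent_aux (meas w) w rfl u u' h1 h2

lemma eqv_join {v v' : List ℕ} (h : Syl v v') : ∃ d, RT v d ∧ RT v' d := by
  induction h with
  | rel a b hab => exact ⟨b, Relation.ReflTransGen.single hab, Relation.ReflTransGen.refl⟩
  | refl a => exact ⟨a, Relation.ReflTransGen.refl, Relation.ReflTransGen.refl⟩
  | symm a b _ ihab =>
    obtain ⟨d, hd1, hd2⟩ := ihab
    exact ⟨d, hd2, hd1⟩
  | trans a b c _ _ ih1 ih2 =>
    obtain ⟨d1, hd1, hd2⟩ := ih1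
    obtain ⟨d2, hd3, hd4⟩ := ih2
    obtain ⟨e, he1, he2⟩ := confluent hd2 hd3
    exact ⟨e, hd1.trans he1, hd4.trans he2⟩

lemma good_rt {v d : List ℕ} (hG : Good v) (h : RT v d) : v = d := by
  rcases h.cases_head with rfl | ⟨c, hc, _⟩
  · rfl
  · exact absurd hc (fun hc => good_no_step hG hc)

lemma exists_nf_aux : ∀ n w, meas w = n → ∃ v, Syl w v ∧ Good v := by
  intro n
  induction n using Nat.strong_induction_on with
  | _ n ih =>
    intro w hm
    by_cases hG : Good w
    · exact ⟨w, Relation.EqvGen.refl w, hG⟩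
    · obtain ⟨u, hu⟩ := exists_step_of_not_good hG
      obtain ⟨v, hv1, hv2⟩ := ih (meas u) (hm ▸ meas_lt hu) u rfl
      exact ⟨v, Relation.EqvGen.trans _ _ _ (Relation.EqvGen.rel _ _ hu) hv1, hv2⟩

lemma low_length : ∀ v : List ℕ, (low v).length = v.length
  | [] => rfl
  | a :: w => by simp [low, low_length w]

lemma low_getD_zero (v : List ℕ) (hv : 0 < v.length) : (low v).getD 0 0 = v.getD 0 0 := by
  cases v with
  | nil => simp at hv
  | cons a w => simp [low]

lemma low_getD_succ : ∀ (v : List ℕ) (i : ℕ), i + 1 < v.length →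
    (low v).getD (i+1) 0 = min ((low v).getD i 0) (v.getD (i+1) 0) := by
  intro v
  induction v with
  | nil => intro i h; simp at h
  | cons a w ih =>
    intro i h
    have hw : i < w.length := by simpa using h
    have hlw : i < (low w).length := by rw [low_length]; exact hw
    have hmap : ((low w).map (min a)).getD i 0 = min a ((low w).getD i 0) := by
      rw [List.getD_eq_getElem _ _ (by simpa using hlw), List.getElem_map,
        List.getD_eq_getElem _ _ hlw]
    cases i with
    | zero =>
      cases w with
      | nil => simp at hw
      | cons b w' =>
        simp only [low, List.getD_cons_succ, List.getD_cons_zero] at *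
        rw [hmap]
        try simp [low]
    | succ t =>
      simp only [low, List.getD_cons_succ] at *
      rw [hmap]
      have ht : t + 1 < w.length := hw
      rw [ih t ht]
      have hmap2 : ((low w).map (min a)).getD t 0 = min a ((low w).getD t 0) := by
        have hlt : t < (low w).length := by rw [low_length]; omega
        rw [List.getD_eq_getElem _ _ (by simpa using hlt), List.getElem_map,
          List.getD_eq_getElem _ _ hlt]
      rw [hmap2]
      omega

lemma low_attained : ∀ (v : List ℕ) (i : ℕ), i < v.length →
    ∃ p, p ≤ i ∧ v.getD p 0 = (low v).getD i 0 := by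
  intro v i
  induction i with
  | zero => intro h; exact ⟨0, le_refl _, (low_getD_zero v h).symm⟩
  | succ t ih =>
    intro h
    obtain ⟨p, hp1, hp2⟩ := ih (by omega)
    rw [low_getD_succ v t h]
    rcases le_total ((low v).getD t 0) (v.getD (t+1) 0) with hle | hle
    · exact ⟨p, by omega, by rw [hp2]; omega⟩
    · exact ⟨t+1, le_refl _, by omega⟩

lemma getD_take (v : List ℕ) (d p : ℕ) (hp : p < d) (hd : d ≤ v.length) :
    (v.take d).getD p 0 = v.getD p 0 := by
  rw [List.getD_eq_getElem _ _ (by rw [List.length_take]; omega),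
    List.getD_eq_getElem _ _ (by omega), List.getElem_take]

lemma key (v v' : List ℕ) (hG' : Good v') (hperm : v.Perm v') (d : ℕ) (hd : d < v.length)
    (hpre : v.take d = v'.take d) (hne : v.getD d 0 < v'.getD d 0)
    (hlow : low v = low v') : False := by
  have hlen : v.length = v'.length := hperm.length_eq
  have hd' : d < v'.length := by omega
  rcases Nat.eq_zero_or_pos d with rfl | hdpos
  · have e1 := low_getD_zero v hd
    have e2 := low_getD_zero v' hd'
    have e3 : (low v).getD 0 0 = (low v').getD 0 0 := by rw [hlow]
    omega
  · have h1 := low_getD_succ v (d-1) (by omega)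
    have h1' := low_getD_succ v' (d-1) (by omega)
    rw [show d - 1 + 1 = d from by omega] at h1 h1'
    have hlowd : (low v).getD d 0 = (low v').getD d 0 := by rw [hlow]
    have hm : (low v).getD (d-1) 0 = (low v').getD (d-1) 0 := by rw [hlow]
    have hm_le : (low v').getD (d-1) 0 ≤ v.getD d 0 := by omega
    obtain ⟨p, hp, hp2⟩ := low_attained v' (d-1) (by omega)
    have hsuff : (v.drop d).Perm (v'.drop d) := by
      have hp' : (v.take d ++ v.drop d).Perm (v'.take d ++ v'.drop d) := by
        rw [List.take_append_drop, List.take_append_drop]; exact hperm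
      rw [hpre] at hp'
      exact (List.perm_append_left_iff _).mp hp'
    have hxmem : v.getD d 0 ∈ v'.drop d := by
      apply hsuff.mem_iff.mp
      rw [List.drop_eq_getElem_cons hd, List.getD_eq_getElem _ _ hd]
      exact List.mem_cons_self
    rw [List.drop_eq_getElem_cons hd'] at hxmem
    have hxmem' : v.getD d 0 ∈ v'.drop (d+1) := by
      rcases List.mem_cons.mp hxmem with h | h
      · rw [← List.getD_eq_getElem _ 0 hd'] at h; omega
      · exact h
    obtain ⟨t, ht, hxt⟩ := List.getElem_of_mem hxmem'
    have ht' : d + 1 + t < v'.length := by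
      have := ht
      rw [List.length_drop] at this
      omega
    have hk : v'.getD (d+1+t) 0 = v.getD d 0 := by
      rw [List.getD_eq_getElem _ _ ht', ← hxt, List.getElem_drop]
    refine hG' p d (d+1+t) (by omega) (by omega) ht' ⟨?_, ?_⟩
    · rw [hk]
      have hpp : v'.getD p 0 = (low v').getD (d-1) 0 := hp2
      omega
    · rw [hk]
      have hpred : v.getD p 0 = v'.getD p 0 := by
        rw [← getD_take v d p (by omega) (by omega), ← getD_take v' d p (by omega) (by omega),
          hpre]
      omega

lemma good_perm_low_eq (v v' : List ℕ) (hGv : Good v) (hGv' : Good v')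
    (hperm : v.Perm v') (hlow : low v = low v') : v = v' := by
  by_contra hne
  have hlen : v.length = v'.length := hperm.length_eq
  have hex : ∃ d, d < v.length ∧ v.getD d 0 ≠ v'.getD d 0 := by
    by_contra h
    push_neg at h
    apply hne
    apply List.ext_getElem hlen
    intro n h1 h2
    have := h n h1
    rwa [List.getD_eq_getElem _ _ h1, List.getD_eq_getElem _ _ h2] at this
  classical
  set d := Nat.find hex with hdd
  obtain ⟨hd, hdne⟩ := Nat.find_spec hex
  have hpre : v.take d = v'.take d := by
    apply List.ext_getElem (by rw [List.length_take, List.length_take, hlen])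
    intro n h1 h2
    have hn : n < d := by
      have := h1; rw [List.length_take] at this; omega
    have hmin := Nat.find_min hex hn
    push_neg at hmin
    have heq := hmin (by omega)
    rw [List.getElem_take, List.getElem_take]
    rw [List.getD_eq_getElem _ _ (by omega : n < v.length),
      List.getD_eq_getElem _ _ (by omega : n < v'.length)] at heq
    exact heq
  rcases lt_trichotomy (v.getD d 0) (v'.getD d 0) with h | h | h
  · exact key v v' hGv' hperm d hd hpre h hlow
  · exact hdne h
  · exact key v' v hGv hperm.symm d (by omega) hpre.symm h hlow.symm

lemma good_iff (w : List ℕ) : (AvoidsABA w ∧ AvoidsACB w) ↔ Good w := by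
  constructor
  · rintro ⟨h1, h2⟩ i j k hij hjk hk ⟨hle, hlt⟩
    rcases eq_or_lt_of_le hle with he | hl
    · exact h1 i j k hij hjk hk ⟨he, hlt⟩
    · exact h2 i j k hij hjk hk ⟨hl, hlt⟩
  · intro h
    refine ⟨fun i j k hij hjk hk ⟨h1, h2⟩ => h i j k hij hjk hk ⟨le_of_eq h1, h2⟩,
            fun i j k hij hjk hk ⟨h1, h2⟩ => h i j k hij hjk hk ⟨le_of_lt h1, h2⟩⟩

/-- Every sylvester class of words over positive integers contains exactly one word avoiding
`aba` and `acb`; such a word is determined by its nonincreasing rearrangement (equivalently,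
its multiset of letters) together with `low w`. -/
theorem stmt6 :
    (∀ w : List ℕ, (∀ a ∈ w, 0 < a) →
      ∃! v : List ℕ, Syl w v ∧ AvoidsABA v ∧ AvoidsACB v) ∧
    (∀ v v' : List ℕ, (∀ a ∈ v, 0 < a) → (∀ a ∈ v', 0 < a) →
      AvoidsABA v → AvoidsACB v → AvoidsABA v' → AvoidsACB v' →
      v.Perm v' → low v = low v' → v = v') := by
  constructor
  · intro w _
    obtain ⟨v, hv1, hv2⟩ := exists_nf_aux (meas w) w rfl
    refine ⟨v, ⟨hv1, (good_iff v).mpr hv2⟩, ?_⟩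
    rintro y ⟨hy1, hy2, hy3⟩
    have hGy : Good y := (good_iff y).mp ⟨hy2, hy3⟩
    have hyv : Syl y v :=
      Relation.EqvGen.trans _ _ _ (Relation.EqvGen.symm _ _ hy1) hv1
    obtain ⟨e, he1, he2⟩ := eqv_join hyv
    exact (good_rt hGy he1).trans (good_rt hv2 he2).symm
  · intro v v' _ _ h1 h2 h3 h4 hperm hlow
    exact good_perm_low_eq v v' ((good_iff v).mp ⟨h1, h2⟩) ((good_iff v').mp ⟨h3, h4⟩)
      hperm hlow
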